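/- Permutation Invariance Lemma (Lemma 3.1, main claim). Let (X_i, Y_i) ∈ ℝ^{p×2}, 1 ≤ i ≤ n, be random matrices and let q_{n,1},…,q_{n,n} and θ_{n,1},…,θ_{n,n} ∈ [0,1] satisfy (n−i)·q_{n,i}·θ_{n,i} = i·q_{n,i+1}·(1−θ_{n,i+1}) for all 1 ≤ i ≤ n−1. Let δ_1,…,δ_n be independent with δ_i ~ Bernoulli(θ_{n,i}), independent of the data, and set ζ_{i,k} = δ_i·X_k + (1−δ_i)·Y_k. Then for any permutation invariant function f(x_1,…,x_n) of n vectors in ℝ^p, the quantity n⁻¹ Σ_{i=1}^n (n!)⁻¹ Σ_{σ} E[ I{σ_i = k}·q_{n,i}·f(U_{σ,i}, ζ_{i,σ_i}) | X, Y ] does not depend on k ∈ {1,…,n}, where σ ranges over permutations of {1,…,n}, U_{σ,i} = (X_{σ_1},…,X_{σ_{i−1}}, Y_{σ_{i+1}},…,Y_{σ_n}), and the conditional expectation is over the δ_i only. -/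

import Mathlib

open MeasureTheory

namespace Stmt8

variable {n p : ℕ}

/-- The interpolation configuration `(X_{σ_1}, …, X_{σ_{i−1}}, ζ, Y_{σ_{i+1}}, …, Y_{σ_n})`:
slot `k < i` holds `x (σ k)`, slot `i` holds `z`, and slot `k > i` holds `y (σ k)`. -/
def lindVec (x y : Fin n → Fin p → ℝ) (σ : Equiv.Perm (Fin n)) (i : Fin n)
    (z : Fin p → ℝ) : Fin n → Fin p → ℝ :=
  fun k => if k < i then x (σ k) else if k = i then z else y (σ k)

/-- A function of `n` vectors in `ℝ^p` is permutation invariant if it is unchanged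
by permuting its inputs. -/
def PermInvariant (f : (Fin n → Fin p → ℝ) → ℝ) : Prop :=
  ∀ (σ : Equiv.Perm (Fin n)) (v : Fin n → Fin p → ℝ), f (v ∘ σ) = f v

/-- Auxiliary: the value of `f` on the configuration with `x` on the slots sent below `m`
and `y` elsewhere. -/
def Psi (x y : Fin n → Fin p → ℝ) (f : (Fin n → Fin p → ℝ) → ℝ) (m : ℕ)
    (σ : Equiv.Perm (Fin n)) : ℝ :=
  f (fun j => if ((σ.symm j : Fin n) : ℕ) < m then x j else y j)

/-- Auxiliary: sum over permutations with the indicator that slot `j` is sent to `k`. -/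
def R (x y : Fin n → Fin p → ℝ) (f : (Fin n → Fin p → ℝ) → ℝ) (m : ℕ)
    (j k : Fin n) : ℝ :=
  ∑ σ : Equiv.Perm (Fin n), if σ j = k then Psi x y f m σ else 0

lemma Psi_mul (x y : Fin n → Fin p → ℝ) (f : (Fin n → Fin p → ℝ) → ℝ) (m : ℕ)
    (σ τ : Equiv.Perm (Fin n)) (hτ : ∀ a : Fin n, ((τ a : Fin n) : ℕ) < m ↔ (a : ℕ) < m) :
    Psi x y f m (σ * τ) = Psi x y f m σ := by
  unfold Psi
  congr 1
  funext j
  have h1 : (σ * τ).symm j = τ.symm (σ.symm j) := rfl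
  rw [h1]
  have h2 : ((τ.symm (σ.symm j) : Fin n) : ℕ) < m ↔ ((σ.symm j : Fin n) : ℕ) < m := by
    have := hτ (τ.symm (σ.symm j))
    rw [Equiv.apply_symm_apply] at this
    exact this.symm
  exact if_congr h2 rfl rfl

lemma R_congr (x y : Fin n → Fin p → ℝ) (f : (Fin n → Fin p → ℝ) → ℝ) (m : ℕ)
    (j j' k : Fin n) (h : (j : ℕ) < m ↔ (j' : ℕ) < m) :
    R x y f m j k = R x y f m j' k := by
  unfold R
  rw [← Equiv.sum_comp (Equiv.mulRight (Equiv.swap j j'))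
    (fun σ => if σ j = k then Psi x y f m σ else 0)]
  refine Finset.sum_congr rfl fun σ _ => ?_
  have hτ : ∀ a : Fin n, ((Equiv.swap j j' a : Fin n) : ℕ) < m ↔ (a : ℕ) < m := by
    intro a
    rcases eq_or_ne a j with rfl | haj
    · rw [Equiv.swap_apply_left]; exact h.symm
    rcases eq_or_ne a j' with rfl | haj'
    · rw [Equiv.swap_apply_right]; exact h
    · rw [Equiv.swap_apply_of_ne_of_ne haj haj']
  have happ : (σ * Equiv.swap j j') j = σ j' := by
    simp [Equiv.Perm.mul_apply, Equiv.swap_apply_left]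
  simp only [Equiv.coe_mulRight]
  rw [Psi_mul x y f m σ (Equiv.swap j j') hτ]
  exact if_congr (by rw [happ]) rfl rfl

lemma R_sum (x y : Fin n → Fin p → ℝ) (f : (Fin n → Fin p → ℝ) → ℝ) (m : ℕ) (k : Fin n) :
    ∑ j : Fin n, R x y f m j k = ∑ σ : Equiv.Perm (Fin n), Psi x y f m σ := by
  unfold R
  rw [Finset.sum_comm]
  refine Finset.sum_congr rfl fun σ _ => ?_
  calc ∑ j : Fin n, (if σ j = k then Psi x y f m σ else 0)
      = ∑ j : Fin n, (if j = σ.symm k then Psi x y f m σ else 0) := by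
        refine Finset.sum_congr rfl fun j _ => if_congr ?_ rfl rfl
        exact ⟨fun h => by simp [← h], fun h => by simp [h]⟩
    _ = Psi x y f m σ := by simp

lemma Psi_const (x y : Fin n → Fin p → ℝ) (f : (Fin n → Fin p → ℝ) → ℝ) (m : ℕ)
    (hm : m = 0 ∨ n ≤ m) (σ σ' : Equiv.Perm (Fin n)) :
    Psi x y f m σ = Psi x y f m σ' := by
  unfold Psi
  congr 1
  funext j
  rcases hm with rfl | hm
  · simp
  · rw [if_pos (lt_of_lt_of_le (Fin.is_lt _) hm), if_pos (lt_of_lt_of_le (Fin.is_lt _) hm)]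

lemma R_const_k (x y : Fin n → Fin p → ℝ) (f : (Fin n → Fin p → ℝ) → ℝ) (m : ℕ)
    (hm : m = 0 ∨ n ≤ m) (j k k' : Fin n) :
    R x y f m j k = R x y f m j k' := by
  unfold R
  rw [← Equiv.sum_comp (Equiv.mulLeft (Equiv.swap k k'))
    (fun σ => if σ j = k then Psi x y f m σ else 0)]
  refine Finset.sum_congr rfl fun σ _ => ?_
  simp only [Equiv.coe_mulLeft]
  have hc : (Equiv.swap k k' * σ) j = k ↔ σ j = k' := by
    rw [Equiv.Perm.mul_apply]
    constructor
    · intro h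
      have := congrArg (Equiv.swap k k') h
      rwa [Equiv.swap_apply_self, Equiv.swap_apply_left] at this
    · intro h; rw [h, Equiv.swap_apply_right]
  rw [Psi_const x y f m hm (Equiv.swap k k' * σ) σ]
  exact if_congr hc rfl rfl

lemma R_slot_sum (x y : Fin n → Fin p → ℝ) (f : (Fin n → Fin p → ℝ) → ℝ) (m : ℕ)
    (hm1 : 1 ≤ m) (hmn : m < n) (k : Fin n) :
    (m : ℝ) * R x y f m ⟨m - 1, Nat.sub_lt_of_lt hmn⟩ k + ((n : ℝ) - m) * R x y f m ⟨m, hmn⟩ k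
      = ∑ σ : Equiv.Perm (Fin n), Psi x y f m σ := by
  rw [← R_sum x y f m k]
  have h1 : ∀ j : Fin n, R x y f m j k
      = if (j : ℕ) < m then R x y f m ⟨m - 1, by omega⟩ k else R x y f m ⟨m, hmn⟩ k := by
    intro j
    by_cases hj : (j : ℕ) < m
    · rw [if_pos hj]
      exact R_congr x y f m j ⟨m - 1, by omega⟩ k (by simp [hj]; omega)
    · rw [if_neg hj]
      exact R_congr x y f m j ⟨m, hmn⟩ k (by simp [hj])
  rw [Finset.sum_congr rfl fun j _ => h1 j, Finset.sum_ite, Finset.sum_const, Finset.sum_const]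
  have hcard1 : (Finset.filter (fun j : Fin n => (j : ℕ) < m) Finset.univ).card = m := by
    have : (Finset.filter (fun j : Fin n => (j : ℕ) < m) Finset.univ)
        = Finset.Iio (⟨m, hmn⟩ : Fin n) := by
      ext j; simp [Finset.mem_Iio, Fin.lt_def]
    rw [this]
    simp
  have hcard2 : (Finset.filter (fun j : Fin n => ¬ (j : ℕ) < m) Finset.univ).card = n - m := by
    have h := Finset.card_filter_add_card_filter_not
      (s := (Finset.univ : Finset (Fin n))) (p := fun j : Fin n => (j : ℕ) < m)
    rw [hcard1] at h
    simp only [Finset.card_univ, Fintype.card_fin] at h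
    omega
  rw [hcard1, hcard2]
  rw [nsmul_eq_mul, nsmul_eq_mul, Nat.cast_sub (le_of_lt hmn)]

lemma cancel_term (x y : Fin n → Fin p → ℝ) (f : (Fin n → Fin p → ℝ) → ℝ)
    (q θ : Fin n → ℝ) (m : ℕ) (hm1 : 1 ≤ m) (hmn : m < n) (k k' : Fin n)
    (hq : ((n : ℝ) - m) * q ⟨m - 1, Nat.sub_lt_of_lt hmn⟩ * θ ⟨m - 1, Nat.sub_lt_of_lt hmn⟩
        = (m : ℝ) * q ⟨m, hmn⟩ * (1 - θ ⟨m, hmn⟩)) :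
    q ⟨m - 1, Nat.sub_lt_of_lt hmn⟩ * θ ⟨m - 1, Nat.sub_lt_of_lt hmn⟩
      * (R x y f m ⟨m - 1, Nat.sub_lt_of_lt hmn⟩ k - R x y f m ⟨m - 1, Nat.sub_lt_of_lt hmn⟩ k')
    + q ⟨m, hmn⟩ * (1 - θ ⟨m, hmn⟩)
      * (R x y f m ⟨m, hmn⟩ k - R x y f m ⟨m, hmn⟩ k') = 0 := by
  have h1 := R_slot_sum x y f m hm1 hmn k
  have h2 := R_slot_sum x y f m hm1 hmn k'
  have hsum : (m : ℝ) * (R x y f m ⟨m - 1, by omega⟩ k - R x y f m ⟨m - 1, by omega⟩ k')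
      + ((n : ℝ) - m) * (R x y f m ⟨m, hmn⟩ k - R x y f m ⟨m, hmn⟩ k') = 0 := by
    have := h1.trans h2.symm
    ring_nf
    ring_nf at this
    linarith
  have hne : ((n : ℝ) - m) ≠ 0 := by
    have : (m : ℝ) < n := by exact_mod_cast hmn
    linarith
  apply mul_left_cancel₀ hne
  rw [mul_zero]
  linear_combination (q ⟨m, hmn⟩ * (1 - θ ⟨m, hmn⟩)) * hsum
    + (R x y f m ⟨m - 1, by omega⟩ k - R x y f m ⟨m - 1, by omega⟩ k') * hq

lemma lindVec_x (x y : Fin n → Fin p → ℝ) (f : (Fin n → Fin p → ℝ) → ℝ)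
    (hf : PermInvariant f) (σ : Equiv.Perm (Fin n)) (i : Fin n) :
    f (lindVec x y σ i (x (σ i))) = Psi x y f ((i : ℕ) + 1) σ := by
  have h : lindVec x y σ i (x (σ i))
      = (fun j => if ((σ.symm j : Fin n) : ℕ) < (i : ℕ) + 1 then x j else y j) ∘ σ := by
    funext a
    simp only [lindVec, Function.comp_apply, Equiv.symm_apply_apply, Fin.lt_def]
    rcases lt_trichotomy (a : ℕ) (i : ℕ) with h1 | h1 | h1
    · rw [if_pos h1, if_pos (by omega)]
    · have ha : a = i := Fin.ext h1
      rw [if_neg (by omega), if_pos ha, ha, if_pos (by omega)]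
    · rw [if_neg (by omega), if_neg (fun hc => by rw [hc] at h1; omega), if_neg (by omega)]
  rw [h, hf]
  rfl

lemma lindVec_y (x y : Fin n → Fin p → ℝ) (f : (Fin n → Fin p → ℝ) → ℝ)
    (hf : PermInvariant f) (σ : Equiv.Perm (Fin n)) (i : Fin n) :
    f (lindVec x y σ i (y (σ i))) = Psi x y f (i : ℕ) σ := by
  have h : lindVec x y σ i (y (σ i))
      = (fun j => if ((σ.symm j : Fin n) : ℕ) < (i : ℕ) then x j else y j) ∘ σ := by
    funext a
    simp only [lindVec, Function.comp_apply, Equiv.symm_apply_apply, Fin.lt_def]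
    rcases lt_trichotomy (a : ℕ) (i : ℕ) with h1 | h1 | h1
    · rw [if_pos h1, if_pos h1]
    · have ha : a = i := Fin.ext h1
      rw [if_neg (by omega), if_pos ha, ha, if_neg (by omega)]
    · rw [if_neg (by omega), if_neg (fun hc => by rw [hc] at h1; omega), if_neg (by omega)]
  rw [h, hf]
  rfl

lemma integral_step
    {Ωδ : Type*} [MeasurableSpace Ωδ] (μδ : Measure Ωδ) [IsProbabilityMeasure μδ]
    (x y : Fin n → Fin p → ℝ) (θ : Fin n → ℝ) (hθ : ∀ i, θ i ∈ Set.Icc (0 : ℝ) 1)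
    (δ : Fin n → Ωδ → ℝ) (hδmeas : ∀ i, Measurable (δ i))
    (hδ01 : ∀ i ω, δ i ω = 0 ∨ δ i ω = 1)
    (hδbern : ∀ i, μδ {ω | δ i ω = 1} = ENNReal.ofReal (θ i))
    (f : (Fin n → Fin p → ℝ) → ℝ) (hf : PermInvariant f)
    (c : ℝ) (i : Fin n) (σ : Equiv.Perm (Fin n)) :
    ∫ ω, c * f (lindVec x y σ i
        (fun j => δ i ω * x (σ i) j + (1 - δ i ω) * y (σ i) j)) ∂μδ
      = c * (θ i * Psi x y f ((i : ℕ) + 1) σ + (1 - θ i) * Psi x y f (i : ℕ) σ) := by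
  set A := Psi x y f ((i : ℕ) + 1) σ with hA
  set B := Psi x y f (i : ℕ) σ with hB
  have hfω : ∀ ω, f (lindVec x y σ i
      (fun j => δ i ω * x (σ i) j + (1 - δ i ω) * y (σ i) j))
      = if δ i ω = 1 then A else B := by
    intro ω
    rcases hδ01 i ω with h | h
    · rw [h, if_neg (by norm_num)]
      have hv : (fun j => (0:ℝ) * x (σ i) j + (1 - 0) * y (σ i) j) = y (σ i) := by
        funext j; ring
      rw [hv, hB]
      exact lindVec_y x y f hf σ i
    · rw [h, if_pos rfl]
      have hv : (fun j => (1:ℝ) * x (σ i) j + (1 - 1) * y (σ i) j) = x (σ i) := by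
        funext j; ring
      rw [hv, hA]
      exact lindVec_x x y f hf σ i
  have hmeas : MeasurableSet {ω | δ i ω = 1} := (hδmeas i) (measurableSet_singleton 1)
  have hrw : (fun ω => c * f (lindVec x y σ i
      (fun j => δ i ω * x (σ i) j + (1 - δ i ω) * y (σ i) j)))
      = fun ω => c * B + Set.indicator {ω | δ i ω = 1} (fun _ => c * (A - B)) ω := by
    funext ω
    rw [hfω ω]
    by_cases h : δ i ω = 1
    · rw [if_pos h, Set.indicator_of_mem (by exact h)]
      ring
    · rw [if_neg h, Set.indicator_of_notMem (by exact h)]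
      ring
  rw [hrw, integral_add (integrable_const _) ((integrable_const _).indicator hmeas),
    integral_const, integral_indicator_const _ hmeas]
  have hμ : μδ.real {ω | δ i ω = 1} = θ i := by
    rw [measureReal_def, hδbern i, ENNReal.toReal_ofReal (hθ i).1]
  rw [hμ]
  simp only [probReal_univ, one_smul, smul_eq_mul]
  ring

lemma final_sum (x y : Fin n → Fin p → ℝ) (f : (Fin n → Fin p → ℝ) → ℝ)
    (q θ : Fin n → ℝ)
    (hqθ : ∀ (i : ℕ) (h1 : 1 ≤ i) (h : i < n),
      ((n : ℝ) - i) * q ⟨i - 1, Nat.sub_lt_of_lt h⟩ * θ ⟨i - 1, Nat.sub_lt_of_lt h⟩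
        = (i : ℝ) * q ⟨i, h⟩ * (1 - θ ⟨i, h⟩))
    (k k' : Fin n) :
    ∑ i : Fin n,
      (q i * θ i * (R x y f ((i : ℕ) + 1) i k - R x y f ((i : ℕ) + 1) i k')
        + q i * (1 - θ i) * (R x y f (i : ℕ) i k - R x y f (i : ℕ) i k')) = 0 := by
  rcases n with _ | nn
  · exact k.elim0
  set U : ℕ → ℝ := fun m => if h : m < nn + 1 then
      q ⟨m, h⟩ * θ ⟨m, h⟩ * (R x y f (m + 1) ⟨m, h⟩ k - R x y f (m + 1) ⟨m, h⟩ k')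
    else 0 with hU
  set V : ℕ → ℝ := fun m => if h : m < nn + 1 then
      q ⟨m, h⟩ * (1 - θ ⟨m, h⟩) * (R x y f m ⟨m, h⟩ k - R x y f m ⟨m, h⟩ k')
    else 0 with hV
  have h0 : ∑ i : Fin (nn + 1),
      (q i * θ i * (R x y f ((i : ℕ) + 1) i k - R x y f ((i : ℕ) + 1) i k')
        + q i * (1 - θ i) * (R x y f (i : ℕ) i k - R x y f (i : ℕ) i k'))
      = ∑ m ∈ Finset.range (nn + 1), (U m + V m) := by
    rw [← Fin.sum_univ_eq_sum_range (fun m => U m + V m) (nn + 1)]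
    refine Finset.sum_congr rfl fun i _ => ?_
    rw [hU, hV]
    simp only [dif_pos i.isLt, Fin.eta]
  rw [h0, Finset.sum_add_distrib]
  have hUlast : U nn = 0 := by
    rw [hU]
    simp only [dif_pos (Nat.lt_succ_self nn)]
    rw [R_const_k x y f (nn + 1) (Or.inr le_rfl) ⟨nn, Nat.lt_succ_self nn⟩ k k']
    ring
  have hV0 : V 0 = 0 := by
    rw [hV]
    simp only [dif_pos (Nat.succ_pos nn)]
    rw [R_const_k x y f 0 (Or.inl rfl) ⟨0, Nat.succ_pos nn⟩ k k']
    ring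
  rw [Finset.sum_range_succ, hUlast, add_zero, Finset.sum_range_succ', hV0, add_zero,
    ← Finset.sum_add_distrib]
  refine Finset.sum_eq_zero fun m hm => ?_
  rw [Finset.mem_range] at hm
  have hm1 : 1 ≤ m + 1 := by omega
  have hmn : m + 1 < nn + 1 := by omega
  have hq := hqθ (m + 1) hm1 hmn
  have hc := cancel_term x y f q θ (m + 1) hm1 hmn k k' hq
  rw [hU, hV]
  simp only [dif_pos (show m < nn + 1 by omega), dif_pos hmn]
  convert hc using 3
  all_goals simp

/-- **Permutation Invariance Lemma (Lemma 3.1, main claim).**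
With weights `q_{n,i}` and Bernoulli parameters `θ_{n,i} ∈ [0,1]` satisfying
`(n−i)·q_{n,i}·θ_{n,i} = i·q_{n,i+1}·(1−θ_{n,i+1})` for `1 ≤ i ≤ n−1`, independent
Bernoulli variables `δ_i ~ Bernoulli(θ_{n,i})` independent of the (conditioned-upon)
data `x, y`, and `ζ_{i,k} = δ_i·x_k + (1−δ_i)·y_k`, for any permutation invariant `f`
the quantity `n⁻¹ Σᵢ (n!)⁻¹ Σ_σ E[ I{σ_i = k}·q_{n,i}·f(U_{σ,i}, ζ_{i,σ_i}) ]`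
does not depend on `k`. -/
theorem permutation_invariance_lemma
    {Ωδ : Type*} [MeasurableSpace Ωδ] (μδ : Measure Ωδ) [IsProbabilityMeasure μδ]
    (x y : Fin n → Fin p → ℝ)
    (q θ : Fin n → ℝ) (hθ : ∀ i, θ i ∈ Set.Icc (0 : ℝ) 1)
    (hqθ : ∀ (i : ℕ) (h1 : 1 ≤ i) (h : i < n),
      ((n : ℝ) - i) * q ⟨i - 1, by omega⟩ * θ ⟨i - 1, by omega⟩
        = (i : ℝ) * q ⟨i, h⟩ * (1 - θ ⟨i, h⟩))
    (δ : Fin n → Ωδ → ℝ)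
    (hδmeas : ∀ i, Measurable (δ i))
    (hδ01 : ∀ i ω, δ i ω = 0 ∨ δ i ω = 1)
    (hδindep : ProbabilityTheory.iIndepFun δ μδ)
    (hδbern : ∀ i, μδ {ω | δ i ω = 1} = ENNReal.ofReal (θ i))
    (f : (Fin n → Fin p → ℝ) → ℝ) (hf : PermInvariant f)
    (k k' : Fin n) :
    (n : ℝ)⁻¹ * ∑ i : Fin n, ((n.factorial : ℝ))⁻¹ * ∑ σ : Equiv.Perm (Fin n),
      ∫ ω, (if σ i = k then (1 : ℝ) else 0) * q i *
        f (lindVec x y σ i (fun j => δ i ω * x (σ i) j + (1 - δ i ω) * y (σ i) j)) ∂μδ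
    = (n : ℝ)⁻¹ * ∑ i : Fin n, ((n.factorial : ℝ))⁻¹ * ∑ σ : Equiv.Perm (Fin n),
      ∫ ω, (if σ i = k' then (1 : ℝ) else 0) * q i *
        f (lindVec x y σ i (fun j => δ i ω * x (σ i) j + (1 - δ i ω) * y (σ i) j)) ∂μδ := by
  have step1 : ∀ kk : Fin n,
      (∑ i : Fin n, ((n.factorial : ℝ))⁻¹ * ∑ σ : Equiv.Perm (Fin n),
        ∫ ω, (if σ i = kk then (1 : ℝ) else 0) * q i *
          f (lindVec x y σ i (fun j => δ i ω * x (σ i) j + (1 - δ i ω) * y (σ i) j)) ∂μδ)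
      = ∑ i : Fin n, ((n.factorial : ℝ))⁻¹ *
          (q i * θ i * R x y f ((i : ℕ) + 1) i kk
            + q i * (1 - θ i) * R x y f (i : ℕ) i kk) := by
    intro kk
    refine Finset.sum_congr rfl fun i _ => ?_
    congr 1
    have hσ : ∀ σ : Equiv.Perm (Fin n),
        (∫ ω, (if σ i = kk then (1 : ℝ) else 0) * q i *
          f (lindVec x y σ i (fun j => δ i ω * x (σ i) j + (1 - δ i ω) * y (σ i) j)) ∂μδ)
        = q i * θ i * (if σ i = kk then Psi x y f ((i : ℕ) + 1) σ else 0)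
          + q i * (1 - θ i) * (if σ i = kk then Psi x y f (i : ℕ) σ else 0) := by
      intro σ
      rw [integral_step μδ x y θ hθ δ hδmeas hδ01 hδbern f hf
        ((if σ i = kk then (1 : ℝ) else 0) * q i) i σ]
      by_cases h : σ i = kk
      · rw [if_pos h, if_pos h, if_pos h]; ring
      · rw [if_neg h, if_neg h, if_neg h]; ring
    rw [Finset.sum_congr rfl fun σ _ => hσ σ, Finset.sum_add_distrib,
      ← Finset.mul_sum, ← Finset.mul_sum]
    rfl
  rw [step1 k, step1 k']
  congr 1
  rw [← sub_eq_zero, ← Finset.sum_sub_distrib]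
  have hterm : ∀ i : Fin n,
      ((n.factorial : ℝ))⁻¹ *
          (q i * θ i * R x y f ((i : ℕ) + 1) i k + q i * (1 - θ i) * R x y f (i : ℕ) i k)
        - ((n.factorial : ℝ))⁻¹ *
          (q i * θ i * R x y f ((i : ℕ) + 1) i k' + q i * (1 - θ i) * R x y f (i : ℕ) i k')
      = ((n.factorial : ℝ))⁻¹ *
          (q i * θ i * (R x y f ((i : ℕ) + 1) i k - R x y f ((i : ℕ) + 1) i k')
            + q i * (1 - θ i) * (R x y f (i : ℕ) i k - R x y f (i : ℕ) i k')) := by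
    intro i; ring
  rw [Finset.sum_congr rfl fun i _ => hterm i, ← Finset.mul_sum,
    final_sum x y f q θ hqθ k k', mul_zero]

end Stmt8
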